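/- Let k ≥ 1 and n ≥ 1 be integers and let A be the k×k integer matrix with rows and columns indexed by 0,…,k−1 whose (i,j) entry is F^k_{n+k−1+j−i} (so the first row is F^k_{n+k−1}, F^k_{n+k}, …, F^k_{n+2k−2} and the last row is F^k_n, F^k_{n+1}, …, F^k_{n+k−1}). Then det A = 1 if k is odd, and det A = (−1)^{n−1} if k is even. -/
import Mathlib

open Matrix Finset

private def Mmat (k : ℕ) : Matrix (Fin k) (Fin k) ℤ :=
  Matrix.of fun i j => if (j : ℕ) + 1 = k then 1 else if (i : ℕ) = (j : ℕ) + 1 then 1 else 0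

private lemma det_Mmat (k : ℕ) (hk : 1 ≤ k) : (Mmat k).det = (-1) ^ (k - 1) := by
  obtain ⟨k', rfl⟩ : ∃ k', k = k' + 1 := ⟨k - 1, (Nat.succ_pred_eq_of_pos hk).symm⟩
  rw [Matrix.det_succ_row_zero]
  rw [Finset.sum_eq_single (Fin.last k')]
  · have h1 : Mmat (k' + 1) 0 (Fin.last k') = 1 := by
      simp [Mmat, Fin.last]
    have h2 : (Mmat (k' + 1)).submatrix Fin.succ (Fin.last k').succAbove = 1 := by
      ext i j
      simp [Mmat, Fin.succAbove, Fin.lt_def, Fin.last, Matrix.one_apply, Fin.ext_iff,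
        Fin.castSucc, Fin.castAdd, Fin.castLE]
      omega
    rw [h1, h2, Matrix.det_one]
    simp [Fin.last]
  · intro j _ hj
    have hjv : (j : ℕ) ≠ k' := fun h => hj (Fin.ext (by simp [Fin.last, h]))
    have h0 : Mmat (k' + 1) 0 j = 0 := by
      simp only [Mmat, Matrix.of_apply]
      rw [if_neg (by omega), if_neg (by simp)]
    rw [h0]; ring
  · intro h; exact absurd (Finset.mem_univ _) h

private lemma shift_lemma (k : ℕ) (hk : 1 ≤ k) (F : ℤ → ℤ)
    (hFrec : ∀ n : ℤ, 1 ≤ n → F n = ∑ i ∈ Finset.Icc 1 k, F (n - i))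
    (m : ℤ) (hm : 1 ≤ m + k) :
    (Matrix.of fun i j : Fin k => F (m + k - 1 + ((j : ℕ) : ℤ) - ((i : ℕ) : ℤ))) * Mmat k
      = Matrix.of fun i j : Fin k => F (m + 1 + k - 1 + ((j : ℕ) : ℤ) - ((i : ℕ) : ℤ)) := by
  ext i j
  rw [Matrix.mul_apply]
  simp only [Mmat, Matrix.of_apply]
  by_cases hj : (j : ℕ) + 1 = k
  · simp only [if_pos hj, mul_one]
    have hilt := i.isLt
    have hrhs : m + 1 + (k : ℤ) - 1 + ((j : ℕ) : ℤ) - ((i : ℕ) : ℤ)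
        = m + 2 * k - 1 - ((i : ℕ) : ℤ) := by omega
    rw [hrhs, hFrec _ (by omega)]
    rw [Fin.sum_univ_eq_sum_range (fun j' => F (m + k - 1 + (j' : ℤ) - ((i : ℕ) : ℤ)))]
    rw [show Finset.Icc 1 k = Finset.Ico 1 (k + 1) from by rw [Finset.Ico_add_one_right_eq_Icc],
      Finset.sum_Ico_eq_sum_range, show k + 1 - 1 = k from by omega,
      ← Finset.sum_range_reflect]
    apply Finset.sum_congr rfl
    intro t ht
    simp only [Finset.mem_range] at ht
    congr 1
    omega
  · simp only [if_neg hj]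
    have hjlt : (j : ℕ) + 1 < k := by omega
    rw [Finset.sum_eq_single (⟨(j : ℕ) + 1, hjlt⟩ : Fin k)]
    · simp only [if_pos rfl, mul_one]
      congr 1
      push_cast
      ring
    · intro b _ hb
      have hbv : (b : ℕ) ≠ (j : ℕ) + 1 := fun h => hb (Fin.ext h)
      rw [if_neg hbv, mul_zero]
    · intro h; exact absurd (Finset.mem_univ _) h

theorem kFib_toeplitz_determinant (k : ℕ) (hk : 1 ≤ k) (F : ℤ → ℤ)
    (hF0 : F 0 = 1) (hFneg : ∀ n : ℤ, n < 0 → F n = 0)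
    (hFrec : ∀ n : ℤ, 1 ≤ n → F n = ∑ i ∈ Finset.Icc 1 k, F (n - i))
    (n : ℕ) (hn : 1 ≤ n) :
    Matrix.det (Matrix.of fun i j : Fin k =>
        F ((n : ℤ) + (k : ℤ) - 1 + (j : ℤ) - (i : ℤ)))
      = if Odd k then 1 else (-1) ^ (n - 1) := by
  have key : ∀ p : ℕ, (Matrix.of fun i j : Fin k =>
      F ((1 - (k : ℤ) + p) + k - 1 + ((j : ℕ) : ℤ) - ((i : ℕ) : ℤ))).det
        = (-1) ^ ((k - 1) * p) := by
    intro p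
    induction p with
    | zero =>
      simp only [Nat.cast_zero, add_zero, mul_zero, pow_zero]
      rw [Matrix.det_of_upperTriangular]
      · apply Finset.prod_eq_one
        intro i _
        simp only [Matrix.of_apply]
        have : (1 : ℤ) - k + k - 1 + ((i : ℕ) : ℤ) - ((i : ℕ) : ℤ) = 0 := by ring
        rw [this, hF0]
      · intro i j hij
        have hji : (j : ℕ) < (i : ℕ) := hij
        simp only [Matrix.of_apply]
        apply hFneg
        omega
    | succ p ih =>
      have hmat : (Matrix.of fun i j : Fin k =>
          F ((1 - (k : ℤ) + ((p + 1 : ℕ) : ℤ)) + k - 1 + ((j : ℕ) : ℤ) - ((i : ℕ) : ℤ)))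
          = (Matrix.of fun i j : Fin k =>
              F ((1 - (k : ℤ) + p) + k - 1 + ((j : ℕ) : ℤ) - ((i : ℕ) : ℤ))) * Mmat k := by
        rw [shift_lemma k hk F hFrec (1 - (k : ℤ) + p) (by push_cast; omega)]
        ext i j
        simp only [Matrix.of_apply]
        congr 1
        push_cast
        ring
      rw [hmat, Matrix.det_mul, ih, det_Mmat k hk, ← pow_add,
        show (k - 1) * p + (k - 1) = (k - 1) * (p + 1) from by ring]
  have hA_eq : (Matrix.of fun i j : Fin k =>
      F ((n : ℤ) + (k : ℤ) - 1 + (j : ℤ) - (i : ℤ)))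
      = Matrix.of fun i j : Fin k =>
          F ((1 - (k : ℤ) + ((n + k - 1 : ℕ) : ℤ)) + k - 1 + ((j : ℕ) : ℤ) - ((i : ℕ) : ℤ)) := by
    ext i j
    simp only [Matrix.of_apply]
    congr 1
    have : ((n + k - 1 : ℕ) : ℤ) = (n : ℤ) + k - 1 := by omega
    rw [this]
    push_cast
    ring
  rw [hA_eq, key (n + k - 1)]
  rcases Nat.even_or_odd k with hke | hko
  · rw [if_neg (by simpa [Nat.not_odd_iff_even] using hke)]
    have hkodd : Odd (k - 1) := Nat.Even.sub_odd hk hke odd_one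
    rcases Nat.even_or_odd (n - 1) with he | ho
    · have hev : Even ((k - 1) * (n + k - 1)) := by
        apply Even.mul_left
        rcases hke with ⟨c, hc⟩
        rcases he with ⟨d, hd⟩
        exact ⟨c + d, by omega⟩
      rw [hev.neg_one_pow, he.neg_one_pow]
    · have hod : Odd ((k - 1) * (n + k - 1)) := by
        apply hkodd.mul
        rcases hke with ⟨c, hc⟩
        rcases ho with ⟨d, hd⟩
        exact ⟨c + d, by omega⟩
      rw [hod.neg_one_pow, ho.neg_one_pow]
  · rw [if_pos hko]
    have hev : Even ((k - 1) * (n + k - 1)) := by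
      apply Even.mul_right
      rcases hko with ⟨c, hc⟩
      exact ⟨c, by omega⟩
    rw [hev.neg_one_pow]
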